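/- Let V ∈ ℕ, c > 0, and for each i ∈ {1,…,V} let A_i ∈ ℝ^{m×n_i}, F_i : ℝ^{n_i} → ℝ and G : ℝ^m → ℝ be differentiable. Define L_c({p_i},{ν_i},q) = Σ_{i=1}^V [F_i(p_i) + ⟨ν_i, A_i p_i − q⟩ + (c/2)‖A_i p_i − q‖²] + G(q). Suppose points (p_i^k, ν_i^k, q^k) and (p_i^{k−1}, ν_i^{k−1}, q^{k−1}) satisfy, for every i: ν_i^k = ν_i^{k−1} + c(A_i p_i^k − q^{k−1}), ∇F_i(p_i^k) = −A_iᵀν_i^k, and ∇G(q^k) = Σ_{i=1}^V [ν_i^k + c(A_i p_i^k − q^k)]. Then there exists a constant C* > 0, depending only on c and the largest singular values λ_{A_iA_iᵀ} of the matrices A_iA_iᵀ, such that ‖∇L_c(w^k)‖ ≤ C*‖w^k − w^{k−1}‖, where w^k = ({p_i^k},{ν_i^k},q^k) denotes the concatenated point and ‖·‖ is the Euclidean norm. -/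

import Mathlib

open Matrix RealInnerProductSpace

/-- The largest singular value of a square real matrix `B`, via its variational
characterization `λ_B = sup_{‖x‖=1} ‖Bx‖` (Euclidean norms). -/
noncomputable def maxSingularValue {k m : ℕ} (B : Matrix (Fin k) (Fin m) ℝ) : ℝ :=
  sSup {r : ℝ | ∃ x : EuclideanSpace ℝ (Fin m), ‖x‖ = 1 ∧ r = ‖Matrix.toEuclideanLin B x‖}

section helpers
variable {E F' : Type*} [NormedAddCommGroup E] [InnerProductSpace ℝ E] [CompleteSpace E]
  [NormedAddCommGroup F'] [InnerProductSpace ℝ F'] {x₀ : E}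

lemma HasGradientAt.add' {f g : E → ℝ} {f' g' : E} (hf : HasGradientAt f f' x₀)
    (hg : HasGradientAt g g' x₀) : HasGradientAt (fun y => f y + g y) (f' + g') x₀ := by
  rw [hasGradientAt_iff_hasFDerivAt] at hf hg ⊢
  have h := hf.add hg
  rw [map_add]
  exact h

lemma HasGradientAt.add_const' {f : E → ℝ} {f' : E} (hf : HasGradientAt f f' x₀) (k : ℝ) :
    HasGradientAt (fun y => f y + k) f' x₀ := by
  rw [hasGradientAt_iff_hasFDerivAt] at hf ⊢
  exact hf.add_const k

lemma HasGradientAt.sum' {ι : Type*} (s : Finset ι) {f : ι → E → ℝ} {f' : ι → E}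
    (hf : ∀ i ∈ s, HasGradientAt (f i) (f' i) x₀) :
    HasGradientAt (fun y => ∑ i ∈ s, f i y) (∑ i ∈ s, f' i) x₀ := by
  simp only [hasGradientAt_iff_hasFDerivAt] at hf ⊢
  simpa [map_sum] using HasFDerivAt.fun_sum hf

lemma grad_inner_gen {u : E → F'} {U : E →L[ℝ] F'} (hu : HasFDerivAt u U x₀) (v : F') (g : E)
    (hg : ∀ dx, ⟪g, dx⟫ = ⟪v, U dx⟫) :
    HasGradientAt (fun x => ⟪v, u x⟫) g x₀ := by
  rw [hasGradientAt_iff_hasFDerivAt]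
  have h2 := (innerSL ℝ v).hasFDerivAt.comp x₀ hu
  have he : InnerProductSpace.toDual ℝ E g = (innerSL ℝ v).comp U :=
    ContinuousLinearMap.ext fun dx => by
      simp [InnerProductSpace.toDual_apply_apply, hg dx]
  rw [he]
  exact h2

lemma grad_quad_gen {u : E → F'} {U : E →L[ℝ] F'} (hu : HasFDerivAt u U x₀) (c : ℝ) (g : E)
    (hg : ∀ dx, ⟪g, dx⟫ = c * ⟪u x₀, U dx⟫) :
    HasGradientAt (fun x => c / 2 * ‖u x‖ ^ 2) g x₀ := by
  rw [hasGradientAt_iff_hasFDerivAt]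
  have h2 := (hu.inner ℝ hu).const_mul (c / 2)
  have hfun : (fun x => c / 2 * ‖u x‖ ^ 2) = fun x => c / 2 * ⟪u x, u x⟫ :=
    funext fun x => by rw [real_inner_self_eq_norm_sq]
  rw [hfun]
  refine h2.congr_fderiv ?_
  ext dx
  simp only [InnerProductSpace.toDual_apply_apply, ContinuousLinearMap.coe_smul', Pi.smul_apply,
    ContinuousLinearMap.coe_comp', Function.comp_apply, fderivInnerCLM_apply,
    ContinuousLinearMap.prod_apply, smul_eq_mul, hg dx]
  rw [real_inner_comm (U dx) (u x₀)]
  ring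

lemma grad_inner_right (u : E) (x₀ : E) : HasGradientAt (fun x => ⟪x, u⟫) u x₀ := by
  rw [hasGradientAt_iff_hasFDerivAt]
  have : (fun x : E => ⟪x, u⟫) = fun x => (InnerProductSpace.toDual ℝ E u) x :=
    funext fun x => by rw [InnerProductSpace.toDual_apply_apply, real_inner_comm]
  rw [this]
  exact (InnerProductSpace.toDual ℝ E u).hasFDerivAt

lemma inner_transpose' {k l : ℕ} (B : Matrix (Fin k) (Fin l) ℝ) (v : EuclideanSpace ℝ (Fin k))
    (x : EuclideanSpace ℝ (Fin l)) :
    ⟪Matrix.toEuclideanLin Bᵀ v, x⟫ = ⟪v, Matrix.toEuclideanLin B x⟫ := by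
  rw [← Matrix.conjTranspose_eq_transpose_of_trivial,
    Matrix.toEuclideanLin_conjTranspose_eq_adjoint]
  exact LinearMap.adjoint_inner_left _ _ _

end helpers

set_option maxHeartbeats 2000000 in
/-- Gradient contraction for consecutive consensus-ADMM iterates: for fixed
`c > 0` and matrices `A_i` there is a constant `C* > 0` (depending only on `c` and the
matrices `A_i`, hence only on `c` and the largest singular values `λ_{A_iA_iᵀ}`) such that
for any differentiable `F_i`, `G`, any `L_c` equal to the consensus augmented Lagrangian,
and any consecutive iterates `w^{k−1}, w^k` satisfying the dual-update condition
`ν_i^k = ν_i^{k−1} + c(A_i p_i^k − q^{k−1})` and the first-order conditions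
`∇F_i(p_i^k) = −A_iᵀν_i^k`, `∇G(q^k) = ∑_i [ν_i^k + c(A_i p_i^k − q^k)]`, we have
`‖∇L_c(w^k)‖ ≤ C*‖w^k − w^{k−1}‖` (gradient and point norms computed blockwise). -/
theorem statement15 {V m : ℕ} {n : Fin V → ℕ} (c : ℝ) (hc : 0 < c)
    (A : (i : Fin V) → Matrix (Fin m) (Fin (n i)) ℝ) :
    ∃ C : ℝ, 0 < C ∧
      ∀ (F : (i : Fin V) → EuclideanSpace ℝ (Fin (n i)) → ℝ),
        (∀ i, Differentiable ℝ (F i)) →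
      ∀ G : EuclideanSpace ℝ (Fin m) → ℝ, Differentiable ℝ G →
      ∀ Lc : ((i : Fin V) → EuclideanSpace ℝ (Fin (n i))) →
          (Fin V → EuclideanSpace ℝ (Fin m)) → EuclideanSpace ℝ (Fin m) → ℝ,
        (∀ p ν q, Lc p ν q =
          (∑ i, (F i (p i) + ⟪ν i, Matrix.toEuclideanLin (A i) (p i) - q⟫
            + c / 2 * ‖Matrix.toEuclideanLin (A i) (p i) - q‖ ^ 2)) + G q) →
      ∀ (pprev pk : (i : Fin V) → EuclideanSpace ℝ (Fin (n i)))
        (νprev νk : Fin V → EuclideanSpace ℝ (Fin m))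
        (qprev qk : EuclideanSpace ℝ (Fin m)),
        (∀ i, νk i = νprev i + c • (Matrix.toEuclideanLin (A i) (pk i) - qprev)) →
        (∀ i, gradient (F i) (pk i) = -(Matrix.toEuclideanLin (A i)ᵀ (νk i))) →
        (gradient G qk = ∑ i, (νk i + c • (Matrix.toEuclideanLin (A i) (pk i) - qk))) →
        Real.sqrt ((∑ i, ‖gradient (fun x => Lc (Function.update pk i x) νk qk) (pk i)‖ ^ 2)
            + (∑ i, ‖gradient (fun x => Lc pk (Function.update νk i x) qk) (νk i)‖ ^ 2)
            + ‖gradient (fun x => Lc pk νk x) qk‖ ^ 2)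
          ≤ C * Real.sqrt ((∑ i, ‖pk i - pprev i‖ ^ 2)
              + (∑ i, ‖νk i - νprev i‖ ^ 2) + ‖qk - qprev‖ ^ 2) := by
  classical
  set b : Fin V → ℝ := fun i =>
    ‖LinearMap.toContinuousLinearMap (Matrix.toEuclideanLin (A i)ᵀ)‖ with hb
  refine ⟨Real.sqrt ((∑ i, (b i * (1 + c)) ^ 2) + V * (1 / c + 1) ^ 2) + 1,
    by positivity, ?_⟩
  intro F hF G hG Lc hLc pprev pk νprev νk qprev qk hdual hFgrad hGgrad
  set S := Real.sqrt ((∑ i, ‖pk i - pprev i‖ ^ 2)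
      + (∑ i, ‖νk i - νprev i‖ ^ 2) + ‖qk - qprev‖ ^ 2) with hS
  have hS0 : 0 ≤ S := Real.sqrt_nonneg _
  have hb0 : ∀ i, 0 ≤ b i := fun i => norm_nonneg _
  -- dual update consequence
  have hTq : ∀ i, Matrix.toEuclideanLin (A i) (pk i) - qk
      = c⁻¹ • (νk i - νprev i) + (qprev - qk) := by
    intro i
    have h1 : νk i - νprev i = c • (Matrix.toEuclideanLin (A i) (pk i) - qprev) := by
      rw [hdual i]; abel
    rw [h1, smul_smul, inv_mul_cancel₀ hc.ne', one_smul]; abel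
  -- p-block gradients
  have hgp : ∀ i, gradient (fun x => Lc (Function.update pk i x) νk qk) (pk i)
      = Matrix.toEuclideanLin (A i)ᵀ ((νk i - νprev i) + c • (qprev - qk)) := by
    intro i
    have hu : HasFDerivAt (fun x => Matrix.toEuclideanLin (A i) x - qk)
        (LinearMap.toContinuousLinearMap (Matrix.toEuclideanLin (A i))) (pk i) :=
      (LinearMap.toContinuousLinearMap (Matrix.toEuclideanLin (A i))).hasFDerivAt.sub_const qk
    have h1 : HasGradientAt (F i) (-(Matrix.toEuclideanLin (A i)ᵀ (νk i))) (pk i) := by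
      have := ((hF i) (pk i)).hasGradientAt
      rwa [hFgrad i] at this
    have h2 : HasGradientAt (fun x => ⟪νk i, Matrix.toEuclideanLin (A i) x - qk⟫)
        (Matrix.toEuclideanLin (A i)ᵀ (νk i)) (pk i) :=
      grad_inner_gen hu (νk i) _ (fun dx => inner_transpose' (A i) (νk i) dx)
    have h3 : HasGradientAt (fun x => c / 2 * ‖Matrix.toEuclideanLin (A i) x - qk‖ ^ 2)
        (c • Matrix.toEuclideanLin (A i)ᵀ (Matrix.toEuclideanLin (A i) (pk i) - qk)) (pk i) := by
      refine grad_quad_gen hu c _ (fun dx => ?_)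
      rw [real_inner_smul_left, inner_transpose']
      rfl
    have hfun : (fun x => Lc (Function.update pk i x) νk qk)
        = fun x => (F i x + ⟪νk i, Matrix.toEuclideanLin (A i) x - qk⟫
            + c / 2 * ‖Matrix.toEuclideanLin (A i) x - qk‖ ^ 2)
          + ((∑ j ∈ Finset.univ.erase i,
              (F j (pk j) + ⟪νk j, Matrix.toEuclideanLin (A j) (pk j) - qk⟫
                + c / 2 * ‖Matrix.toEuclideanLin (A j) (pk j) - qk‖ ^ 2)) + G qk) := by
      funext x
      rw [hLc, ← Finset.add_sum_erase _ _ (Finset.mem_univ i), Function.update_self]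
      rw [Finset.sum_congr rfl (fun j hj => by
        rw [Function.update_of_ne (Finset.ne_of_mem_erase hj)])]
      ring
    rw [hfun, (((h1.add' h2).add' h3).add_const' _).gradient, hTq i]
    rw [map_add, _root_.map_smul, map_add, _root_.map_smul, smul_add, smul_smul,
      mul_inv_cancel₀ hc.ne', one_smul]
    abel
  -- ν-block gradients
  have hgν : ∀ i, gradient (fun x => Lc pk (Function.update νk i x) qk) (νk i)
      = Matrix.toEuclideanLin (A i) (pk i) - qk := by
    intro i
    have hfun : (fun x => Lc pk (Function.update νk i x) qk)
        = fun x => ⟪x, Matrix.toEuclideanLin (A i) (pk i) - qk⟫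
          + ((F i (pk i) + c / 2 * ‖Matrix.toEuclideanLin (A i) (pk i) - qk‖ ^ 2)
            + ((∑ j ∈ Finset.univ.erase i,
              (F j (pk j) + ⟪νk j, Matrix.toEuclideanLin (A j) (pk j) - qk⟫
                + c / 2 * ‖Matrix.toEuclideanLin (A j) (pk j) - qk‖ ^ 2)) + G qk)) := by
      funext x
      rw [hLc, ← Finset.add_sum_erase _ _ (Finset.mem_univ i), Function.update_self]
      rw [Finset.sum_congr rfl (fun j hj => by
        rw [Function.update_of_ne (Finset.ne_of_mem_erase hj)])]
      ring
    rw [hfun]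
    exact ((grad_inner_right _ (νk i)).add_const' _).gradient
  -- q-block gradient
  have hgq : gradient (fun x => Lc pk νk x) qk = 0 := by
    have hfun : (fun x => Lc pk νk x) = fun x =>
        (∑ j, (F j (pk j) + ⟪νk j, Matrix.toEuclideanLin (A j) (pk j) - x⟫
          + c / 2 * ‖Matrix.toEuclideanLin (A j) (pk j) - x‖ ^ 2)) + G x :=
      funext fun x => hLc pk νk x
    have hterm : ∀ j : Fin V, HasGradientAt
        (fun x => F j (pk j) + ⟪νk j, Matrix.toEuclideanLin (A j) (pk j) - x⟫
          + c / 2 * ‖Matrix.toEuclideanLin (A j) (pk j) - x‖ ^ 2)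
        ((0 + -(νk j)) + c • (qk - Matrix.toEuclideanLin (A j) (pk j))) qk := by
      intro j
      have hu : HasFDerivAt (fun x : EuclideanSpace ℝ (Fin m) =>
          Matrix.toEuclideanLin (A j) (pk j) - x)
          (-(ContinuousLinearMap.id ℝ (EuclideanSpace ℝ (Fin m)))) qk :=
        (hasFDerivAt_id qk).const_sub _
      have h2 : HasGradientAt (fun x => ⟪νk j, Matrix.toEuclideanLin (A j) (pk j) - x⟫)
          (-(νk j)) qk :=
        grad_inner_gen hu (νk j) _ (fun dx => by
          simp [inner_neg_left, inner_neg_right])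
      have h3 : HasGradientAt
          (fun x => c / 2 * ‖Matrix.toEuclideanLin (A j) (pk j) - x‖ ^ 2)
          (c • (qk - Matrix.toEuclideanLin (A j) (pk j))) qk := by
        refine grad_quad_gen hu c _ (fun dx => ?_)
        simp only [real_inner_smul_left, ContinuousLinearMap.neg_apply,
          ContinuousLinearMap.coe_id', id_eq, inner_neg_right]
        rw [← neg_sub qk (Matrix.toEuclideanLin (A j) (pk j)), inner_neg_left]
        ring
      exact ((hasGradientAt_const qk (F j (pk j))).add' h2).add' h3
    have hsum := (HasGradientAt.sum' Finset.univ (fun j _ => hterm j)).add'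
      ((hG qk).hasGradientAt)
    rw [hfun, hsum.gradient, hGgrad, ← Finset.sum_add_distrib]
    refine Finset.sum_eq_zero fun j _ => ?_
    simp only [smul_sub, zero_add]
    abel
  -- norm estimates
  have hνS : ∀ i, ‖νk i - νprev i‖ ≤ S := by
    intro i
    have h2 : ‖νk i - νprev i‖ ^ 2 ≤ ∑ j, ‖νk j - νprev j‖ ^ 2 :=
      Finset.single_le_sum (f := fun j => ‖νk j - νprev j‖ ^ 2)
        (fun j _ => by positivity) (Finset.mem_univ i)
    have h3 : (0:ℝ) ≤ ∑ i, ‖pk i - pprev i‖ ^ 2 := by positivity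
    have h4 : (0:ℝ) ≤ ‖qk - qprev‖ ^ 2 := by positivity
    calc ‖νk i - νprev i‖ = Real.sqrt (‖νk i - νprev i‖ ^ 2) :=
          (Real.sqrt_sq (norm_nonneg _)).symm
      _ ≤ S := Real.sqrt_le_sqrt (by linarith)
  have hqS : ‖qprev - qk‖ ≤ S := by
    have h3 : (0:ℝ) ≤ ∑ i, ‖pk i - pprev i‖ ^ 2 := by positivity
    have h4 : (0:ℝ) ≤ ∑ i, ‖νk i - νprev i‖ ^ 2 := by positivity
    calc ‖qprev - qk‖ = Real.sqrt (‖qk - qprev‖ ^ 2) := by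
          rw [norm_sub_rev, Real.sqrt_sq (norm_nonneg _)]
      _ ≤ S := Real.sqrt_le_sqrt (by linarith)
  have hgpn : ∀ i, ‖Matrix.toEuclideanLin (A i)ᵀ ((νk i - νprev i) + c • (qprev - qk))‖
      ≤ b i * (1 + c) * S := by
    intro i
    calc ‖Matrix.toEuclideanLin (A i)ᵀ ((νk i - νprev i) + c • (qprev - qk))‖
        ≤ b i * ‖(νk i - νprev i) + c • (qprev - qk)‖ :=
          (LinearMap.toContinuousLinearMap (Matrix.toEuclideanLin (A i)ᵀ)).le_opNorm _
      _ ≤ b i * (‖νk i - νprev i‖ + c * ‖qprev - qk‖) := by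
          refine mul_le_mul_of_nonneg_left ?_ (hb0 i)
          calc ‖(νk i - νprev i) + c • (qprev - qk)‖
              ≤ ‖νk i - νprev i‖ + ‖c • (qprev - qk)‖ := norm_add_le _ _
            _ = ‖νk i - νprev i‖ + c * ‖qprev - qk‖ := by
                rw [norm_smul, Real.norm_eq_abs, abs_of_pos hc]
      _ ≤ b i * ((1 + c) * S) := by
          refine mul_le_mul_of_nonneg_left ?_ (hb0 i)
          calc ‖νk i - νprev i‖ + c * ‖qprev - qk‖
              ≤ S + c * S := add_le_add (hνS i) (mul_le_mul_of_nonneg_left hqS hc.le)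
            _ = (1 + c) * S := by ring
      _ = b i * (1 + c) * S := by ring
  have hgνn : ∀ i, ‖c⁻¹ • (νk i - νprev i) + (qprev - qk)‖ ≤ (1 / c + 1) * S := by
    intro i
    calc ‖c⁻¹ • (νk i - νprev i) + (qprev - qk)‖
        ≤ ‖c⁻¹ • (νk i - νprev i)‖ + ‖qprev - qk‖ := norm_add_le _ _
      _ = (1 / c) * ‖νk i - νprev i‖ + ‖qprev - qk‖ := by
          rw [norm_smul, Real.norm_eq_abs, abs_of_pos (by positivity : (0:ℝ) < c⁻¹),
            one_div]
      _ ≤ (1 / c) * S + S :=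
          add_le_add (mul_le_mul_of_nonneg_left (hνS i) (by positivity)) hqS
      _ = (1 / c + 1) * S := by ring
  -- final assembly
  simp only [hgp, hgν, hgq, hTq, norm_zero]
  have hQ0 : (0:ℝ) ≤ (∑ i, (b i * (1 + c)) ^ 2) + V * (1 / c + 1) ^ 2 := by positivity
  have key : (∑ i, ‖Matrix.toEuclideanLin (A i)ᵀ ((νk i - νprev i) + c • (qprev - qk))‖ ^ 2)
      + (∑ i, ‖c⁻¹ • (νk i - νprev i) + (qprev - qk)‖ ^ 2) + (0:ℝ) ^ 2
      ≤ ((∑ i, (b i * (1 + c)) ^ 2) + V * (1 / c + 1) ^ 2) * S ^ 2 := by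
    have e1 : (∑ i, ‖Matrix.toEuclideanLin (A i)ᵀ ((νk i - νprev i) + c • (qprev - qk))‖ ^ 2)
        ≤ ∑ i, (b i * (1 + c)) ^ 2 * S ^ 2 := by
      refine Finset.sum_le_sum fun i _ => ?_
      calc ‖Matrix.toEuclideanLin (A i)ᵀ ((νk i - νprev i) + c • (qprev - qk))‖ ^ 2
          ≤ (b i * (1 + c) * S) ^ 2 := pow_le_pow_left₀ (norm_nonneg _) (hgpn i) 2
        _ = (b i * (1 + c)) ^ 2 * S ^ 2 := by ring
    have e2 : (∑ i, ‖c⁻¹ • (νk i - νprev i) + (qprev - qk)‖ ^ 2)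
        ≤ (V : ℝ) * ((1 / c + 1) ^ 2 * S ^ 2) := by
      calc (∑ i, ‖c⁻¹ • (νk i - νprev i) + (qprev - qk)‖ ^ 2)
          ≤ ∑ _i : Fin V, (1 / c + 1) ^ 2 * S ^ 2 := by
            refine Finset.sum_le_sum fun i _ => ?_
            calc ‖c⁻¹ • (νk i - νprev i) + (qprev - qk)‖ ^ 2
                ≤ ((1 / c + 1) * S) ^ 2 := pow_le_pow_left₀ (norm_nonneg _) (hgνn i) 2
              _ = (1 / c + 1) ^ 2 * S ^ 2 := by ring
        _ = (V : ℝ) * ((1 / c + 1) ^ 2 * S ^ 2) := by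
            rw [Finset.sum_const, Finset.card_univ, Fintype.card_fin, nsmul_eq_mul]
    have e3 : ∑ i, (b i * (1 + c)) ^ 2 * S ^ 2 = (∑ i, (b i * (1 + c)) ^ 2) * S ^ 2 :=
      (Finset.sum_mul _ _ _).symm
    rw [e3] at e1
    have e4 : (V : ℝ) * ((1 / c + 1) ^ 2 * S ^ 2) = V * (1 / c + 1) ^ 2 * S ^ 2 := by ring
    have e5 : ((∑ i, (b i * (1 + c)) ^ 2) + V * (1 / c + 1) ^ 2) * S ^ 2
        = (∑ i, (b i * (1 + c)) ^ 2) * S ^ 2 + V * (1 / c + 1) ^ 2 * S ^ 2 := by ring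
    have e6 : (0:ℝ) ^ 2 = 0 := by norm_num
    linarith
  calc Real.sqrt ((∑ i, ‖Matrix.toEuclideanLin (A i)ᵀ
          ((νk i - νprev i) + c • (qprev - qk))‖ ^ 2)
        + (∑ i, ‖c⁻¹ • (νk i - νprev i) + (qprev - qk)‖ ^ 2) + (0:ℝ) ^ 2)
      ≤ Real.sqrt (((∑ i, (b i * (1 + c)) ^ 2) + V * (1 / c + 1) ^ 2) * S ^ 2) :=
        Real.sqrt_le_sqrt key
    _ = Real.sqrt ((∑ i, (b i * (1 + c)) ^ 2) + V * (1 / c + 1) ^ 2) * S := by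
        rw [Real.sqrt_mul hQ0, Real.sqrt_sq hS0]
    _ ≤ (Real.sqrt ((∑ i, (b i * (1 + c)) ^ 2) + V * (1 / c + 1) ^ 2) + 1) * S :=
        mul_le_mul_of_nonneg_right (by linarith) hS0
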